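/- Combining partial decompression with the factor length bound: for a string S of length N represented by an SLP with variables X_1,...,X_n, every LZ78 factor of S is a substring of some string in T_S = { t_i : |val(X_i)| ≥ c_N }, where c_N = √(2N + 1/4) − 1/2, t_i = suf(val(X_{ℓ(i)}), ⌈c_N⌉−1)·pre(val(X_{r(i)}), ⌈c_N⌉−1), and the total length of the strings in T_S is at most 2n(⌈c_N⌉−1) = O(n√N). -/

import Mathlib

/-- A straight line program (SLP): variables are indexed `0, 1, 2, …` (variable `i`
corresponds to `X_{i+1}` in 1-based notation); each rule is either a terminal character
or a concatenation of two variables with strictly smaller indices. The SLP has `n`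
variables `0, …, n-1` and represents `val (n-1)`. -/
structure SLP (α : Type*) where
  n : ℕ
  rule : ℕ → α ⊕ (ℕ × ℕ)
  valid : ∀ i l r, rule i = Sum.inr (l, r) → l < i ∧ r < i

/-- The string derived from variable `i` of the SLP. -/
def SLP.val {α : Type*} (P : SLP α) (i : ℕ) : List α :=
  match h : P.rule i with
  | Sum.inl a => [a]
  | Sum.inr (l, r) =>
    have _hv := P.valid i l r h
    P.val l ++ P.val r
termination_by i
decreasing_by
  · exact _hv.1
  · exact _hv.2

/-- The LZ78 dictionary available when computing the `i`-th factor: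
singleton characters, together with any earlier factor extended by one character. -/
def LZDict {α : Type*} (fs : List (List α)) (i : ℕ) (g : List α) : Prop :=
  (∃ c : α, g = [c]) ∨ ∃ f ∈ fs.take i, ∃ c : α, g = f ++ [c]

/-- `fs` is the LZ78 factorization of `S`: the factors concatenate to `S`, each factor
is in the dictionary of earlier factors, and each factor is the longest prefix of the
remaining suffix that lies in the dictionary. -/
def IsLZ78 {α : Type*} (S : List α) (fs : List (List α)) : Prop :=
  S = fs.flatten ∧
  ∀ i < fs.length,
    LZDict fs i (fs.getD i []) ∧
    ∀ g : List α, LZDict fs i g → g <+: (fs.drop i).flatten →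
      g.length ≤ (fs.getD i []).length

/-- The string `t_i` built from windows of width `q−1` around the boundary of rule `i`. -/
def SLP.tstr {α : Type*} (P : SLP α) (q : ℕ) (i : ℕ) : List α :=
  match P.rule i with
  | Sum.inl _ => []
  | Sum.inr (l, r) =>
    (P.val l).drop ((P.val l).length - (q - 1)) ++ (P.val r).take (q - 1)

section aux_lz78pd

lemma SLP.val_inl' {α : Type*} {P : SLP α} {i : ℕ} {a : α} (h : P.rule i = Sum.inl a) :
    P.val i = [a] := by
  rw [SLP.val]; split <;> simp_all

lemma SLP.val_inr' {α : Type*} {P : SLP α} {i l r : ℕ} (h : P.rule i = Sum.inr (l, r)) :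
    P.val i = P.val l ++ P.val r := by
  rw [SLP.val]; split <;> simp_all

lemma SLP.tstr_inr' {α : Type*} {P : SLP α} {q i l r : ℕ} (h : P.rule i = Sum.inr (l, r)) :
    P.tstr q i = (P.val l).drop ((P.val l).length - (q - 1)) ++ (P.val r).take (q - 1) := by
  rw [SLP.tstr]; split <;> simp_all

lemma lz_len_exists' {α : Type*} {S : List α} {fs : List (List α)} (h : IsLZ78 S fs) :
    ∀ i, i < fs.length → ∀ s, 1 ≤ s → s ≤ (fs.getD i []).length →
    ∃ j < fs.length, (fs.getD j []).length = s := by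
  intro i
  induction i using Nat.strong_induction_on with
  | _ i ih =>
    intro hi s hs1 hs2
    obtain ⟨hd, -⟩ := (h.2 i hi)
    rcases hd with ⟨c, hc⟩ | ⟨f, hf, c, hc⟩
    · refine ⟨i, hi, ?_⟩
      rw [hc] at hs2 ⊢
      simp at hs2 ⊢
      omega
    · rw [hc, List.length_append, List.length_singleton] at hs2
      rcases eq_or_lt_of_le hs2 with heq | hlt
      · exact ⟨i, hi, by rw [hc, List.length_append, List.length_singleton, heq]⟩
      · obtain ⟨k, hk, hkf⟩ := List.getElem_of_mem hf
        have hki : k < i := by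
          have := hk; rw [List.length_take] at this; omega
        have hkl : k < fs.length := by
          have := hk; rw [List.length_take] at this; omega
        have hfk : fs.getD k [] = f := by
          rw [List.getD_eq_getElem _ _ hkl, ← List.getElem_take (xs := fs) (j := i)]
          exact hkf
        exact ih k hki hkl s hs1 (by rw [hfk]; omega)

lemma sum_getD_nat' (l : List ℕ) : ∑ i ∈ Finset.range l.length, l.getD i 0 = l.sum := by
  induction l with
  | nil => simp
  | cons a t ih =>
    rw [List.length_cons, Finset.sum_range_succ']
    simp only [List.getD_cons_succ, List.getD_cons_zero]
    rw [ih, List.sum_cons, Nat.add_comm]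

lemma lz_sum_bound' {α : Type*} {S : List α} {fs : List (List α)} (h : IsLZ78 S fs)
    {i : ℕ} (hi : i < fs.length) :
    (fs.getD i []).length * ((fs.getD i []).length + 1) ≤ 2 * S.length := by
  set L := (fs.getD i []).length with hL
  have hex : ∀ s : ℕ, ∃ j, 1 ≤ s → s ≤ L → j < fs.length ∧ (fs.getD j []).length = s := by
    intro s
    by_cases hs : 1 ≤ s ∧ s ≤ L
    · obtain ⟨j, hj, hjs⟩ := lz_len_exists' h i hi s hs.1 hs.2
      exact ⟨j, fun _ _ => ⟨hj, hjs⟩⟩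
    · exact ⟨0, fun h1 h2 => absurd ⟨h1, h2⟩ hs⟩
  choose g hg using hex
  have hinj : ∀ x ∈ Finset.Icc 1 L, ∀ y ∈ Finset.Icc 1 L, g x = g y → x = y := by
    intro x hx y hy hxy
    rw [Finset.mem_Icc] at hx hy
    have h1 := (hg x hx.1 hx.2).2
    have h2 := (hg y hy.1 hy.2).2
    rw [hxy] at h1; omega
  have hsub : (Finset.Icc 1 L).image g ⊆ Finset.range fs.length := by
    intro j hj
    rw [Finset.mem_image] at hj
    obtain ⟨s, hs, hgs⟩ := hj
    rw [Finset.mem_Icc] at hs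
    rw [Finset.mem_range, ← hgs]
    exact (hg s hs.1 hs.2).1
  have key : ∑ s ∈ Finset.Icc 1 L, s ≤ S.length := by
    calc ∑ s ∈ Finset.Icc 1 L, s
        = ∑ s ∈ Finset.Icc 1 L, (fs.getD (g s) []).length := by
          refine Finset.sum_congr rfl fun s hs => ?_
          rw [Finset.mem_Icc] at hs
          exact ((hg s hs.1 hs.2).2).symm
      _ = ∑ j ∈ (Finset.Icc 1 L).image g, (fs.getD j []).length :=
          (Finset.sum_image (f := fun j => (fs.getD j []).length) hinj).symm
      _ ≤ ∑ j ∈ Finset.range fs.length, (fs.getD j []).length :=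
          Finset.sum_le_sum_of_subset hsub
      _ = S.length := by
          have heq : ∀ j ∈ Finset.range fs.length,
              (fs.getD j []).length = (fs.map List.length).getD j 0 := by
            intro j hj
            rw [Finset.mem_range] at hj
            rw [List.getD_eq_getElem _ _ hj,
                List.getD_eq_getElem _ _ (by simpa using hj)]
            simp
          rw [Finset.sum_congr rfl heq]
          have hh := sum_getD_nat' (fs.map List.length)
          rw [List.length_map] at hh
          rw [hh, ← List.length_flatten, ← h.1]
  have gauss : (∑ s ∈ Finset.Icc 1 L, s) * 2 = L * (L + 1) := by
    have h1 : ∑ s ∈ Finset.Icc 1 L, s = ∑ s ∈ Finset.range (L + 1), s := by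
      rw [← Finset.Ico_add_one_right_eq_Icc, Finset.range_eq_Ico,
        ← Finset.sum_Ico_consecutive (fun s => s) (by omega : 0 ≤ 1) (by omega : 1 ≤ L + 1)]
      simp
    rw [h1, Finset.sum_range_id_mul_two]
    simp [Nat.mul_comm]
  omega

lemma descent' {α : Type*} (P : SLP α) (c : ℝ) (q : ℕ) (hcq : c ≤ (q : ℝ)) (hc1 : 1 < c) :
    ∀ i, ∀ w : List α, w ≠ [] → w.length ≤ q → w <:+: P.val i → c ≤ ((P.val i).length : ℝ) →
    ∃ j ≤ i, ∃ l r, P.rule j = Sum.inr (l, r) ∧ c ≤ ((P.val j).length : ℝ) ∧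
      w <:+: P.tstr q j := by
  intro i
  induction i using Nat.strong_induction_on with
  | _ i ih =>
    intro w hw hwq hinf hci
    have hq2 : 2 ≤ q := by
      by_contra hq
      push_neg at hq
      interval_cases q <;> simp_all <;> linarith
    rcases hrule : P.rule i with a | ⟨l, r⟩
    · rw [SLP.val_inl' hrule] at hci
      simp at hci; linarith
    · have hvalid := P.valid i l r hrule
      have hval : P.val i = P.val l ++ P.val r := SLP.val_inr' hrule
      obtain ⟨s, t, hst⟩ := hinf
      rw [hval] at hst
      set A := P.val l with hA
      set B := P.val r with hB
      by_cases h1 : s.length + w.length ≤ A.length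
      · -- occurrence entirely within A
        have hwA : w <:+: A := by
          have hA' : A = (s ++ w) ++ t.take (A.length - (s ++ w).length) := by
            conv_lhs => rw [show A = ((s ++ w) ++ t).take A.length by rw [hst]; simp]
            rw [List.take_append,
              List.take_of_length_le (by simp; omega)]
          exact ⟨s, t.take (A.length - (s ++ w).length), hA'.symm⟩
        by_cases hcl : c ≤ (A.length : ℝ)
        · obtain ⟨j, hj, rest⟩ := ih l hvalid.1 w hw hwq hwA hcl
          exact ⟨j, by omega, rest⟩
        · push_neg at hcl
          have hAq : A.length ≤ q - 1 := by
            have h' : (A.length : ℝ) < (q : ℝ) := lt_of_lt_of_le hcl hcq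
            have := Nat.cast_lt.mp h'
            omega
          refine ⟨i, le_refl i, l, r, hrule, hci, ?_⟩
          rw [SLP.tstr_inr' hrule, ← hA, ← hB]
          rw [Nat.sub_eq_zero_of_le (by omega), List.drop_zero]
          exact hwA.trans (List.prefix_append A _).isInfix
      · by_cases h2 : A.length ≤ s.length
        · -- occurrence entirely within B
          have hwB : w <:+: B := by
            refine ⟨s.drop A.length, t, ?_⟩
            have hB' : B = ((s ++ w) ++ t).drop A.length := by rw [hst]; simp
            rw [hB', List.drop_append, List.drop_append,
              Nat.sub_eq_zero_of_le h2, List.drop_zero,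
              Nat.sub_eq_zero_of_le (by simp; omega), List.drop_zero]
          by_cases hcr : c ≤ (B.length : ℝ)
          · obtain ⟨j, hj, rest⟩ := ih r hvalid.2 w hw hwq hwB hcr
            exact ⟨j, by omega, rest⟩
          · push_neg at hcr
            have hBq : B.length ≤ q - 1 := by
              have h' : (B.length : ℝ) < (q : ℝ) := lt_of_lt_of_le hcr hcq
              have := Nat.cast_lt.mp h'
              omega
            refine ⟨i, le_refl i, l, r, hrule, hci, ?_⟩
            rw [SLP.tstr_inr' hrule, ← hA, ← hB]
            rw [List.take_of_length_le (by omega)]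
            exact hwB.trans (List.suffix_append _ B).isInfix
        · -- crossing occurrence
          push_neg at h1 h2
          set a := A.length - s.length with ha
          have ha1 : 1 ≤ a := by omega
          have haw : a < w.length := by omega
          have haq : a ≤ q - 1 := by omega
          have hsplit : (s ++ w.take a) ++ (w.drop a ++ t) = A ++ B := by
            rw [← hst, List.append_assoc, ← List.append_assoc (w.take a),
              List.take_append_drop, List.append_assoc]
          have hlen : (s ++ w.take a).length = A.length := by simp; omega
          obtain ⟨hAeq, hBeq⟩ := List.append_inj hsplit hlen
          have hdropA' : ∀ n ≤ s.length, A.drop n = s.drop n ++ w.take a := by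
            intro n hns
            conv_lhs => rw [← hAeq]
            rw [List.drop_append,
              Nat.sub_eq_zero_of_le hns, List.drop_zero]
          have hdropA : A.drop (A.length - (q - 1)) =
              s.drop (A.length - (q - 1)) ++ w.take a :=
            hdropA' _ (by omega)
          have htakeB : B.take (q - 1) =
              w.drop a ++ t.take (q - 1 - (w.length - a)) := by
            conv_lhs => rw [← hBeq]
            rw [List.take_append,
              List.take_of_length_le (by simp; omega)]
            congr 1
            simp
          refine ⟨i, le_refl i, l, r, hrule, hci, ?_⟩
          rw [SLP.tstr_inr' hrule, ← hA, ← hB, hdropA, htakeB]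
          refine ⟨s.drop (A.length - (q - 1)), t.take (q - 1 - (w.length - a)), ?_⟩
          conv_rhs => rw [List.append_assoc, ← List.append_assoc (w.take a),
            List.take_append_drop, ← List.append_assoc]

lemma nat_le_cN' {L N : ℕ} (h : L * (L + 1) ≤ 2 * N) :
    (L : ℝ) ≤ Real.sqrt (2 * N + 1 / 4) - 1 / 2 := by
  have h1 : ((L : ℝ) + 1 / 2) ^ 2 ≤ 2 * N + 1 / 4 := by
    have h' : ((L * (L + 1) : ℕ) : ℝ) ≤ ((2 * N : ℕ) : ℝ) := Nat.cast_le.mpr h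
    push_cast at h'
    nlinarith
  have h2 : (L : ℝ) + 1 / 2 ≤ Real.sqrt (2 * N + 1 / 4) := by
    have := Real.sqrt_le_sqrt h1
    rwa [Real.sqrt_sq (by positivity)] at this
  linarith

lemma cN_le_N' {N : ℕ} (hN : 3 ≤ N) : Real.sqrt (2 * N + 1 / 4) - 1 / 2 ≤ (N : ℝ) := by
  have hN' : (3 : ℝ) ≤ (N : ℝ) := by exact_mod_cast hN
  have h1 : (2 * (N : ℝ) + 1 / 4) ≤ ((N : ℝ) + 1 / 2) ^ 2 := by nlinarith
  have h2 : Real.sqrt (2 * N + 1 / 4) ≤ (N : ℝ) + 1 / 2 := by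
    have := Real.sqrt_le_sqrt h1
    rwa [Real.sqrt_sq (by positivity)] at this
  linarith

lemma one_lt_cN' {N : ℕ} (hN : 3 ≤ N) : (1 : ℝ) < Real.sqrt (2 * N + 1 / 4) - 1 / 2 := by
  have h1 : ((3 : ℝ) / 2) ^ 2 < 2 * (N : ℝ) + 1 / 4 := by
    have : (3 : ℝ) ≤ (N : ℝ) := by exact_mod_cast hN
    nlinarith
  have h2 : (3 : ℝ) / 2 < Real.sqrt (2 * N + 1 / 4) := by
    have := Real.sqrt_lt_sqrt (by positivity) h1
    rwa [Real.sqrt_sq (by norm_num)] at this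
  linarith

end aux_lz78pd

/-- with `c_N = √(2N+1/4) − 1/2` and `q = ⌈c_N⌉`, every LZ78 factor of
the string `S` represented by the SLP is a substring of some `t_i` with
`|val(X_i)| ≥ c_N`, and the total length of these strings is at most `2n(q−1)`. -/
theorem lz78_factors_in_partial_decompression {α : Type*} (P : SLP α) (hn : 1 ≤ P.n)
    (S : List α) (hS : S = P.val (P.n - 1)) (hlen : 3 ≤ S.length)
    (fs : List (List α)) (h : IsLZ78 S fs) :
    letI cN : ℝ := Real.sqrt (2 * S.length + 1 / 4) - 1 / 2
    letI q : ℕ := ⌈cN⌉₊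
    (∀ f ∈ fs, ∃ i < P.n, ∃ l r, P.rule i = Sum.inr (l, r) ∧
        cN ≤ ((P.val i).length : ℝ) ∧ f <:+: P.tstr q i) ∧
    (∑ i ∈ (Finset.range P.n).filter (fun i => cN ≤ ((P.val i).length : ℝ)),
        (P.tstr q i).length) ≤ 2 * P.n * (q - 1) := by
  set cN : ℝ := Real.sqrt (2 * S.length + 1 / 4) - 1 / 2 with hcN
  set q : ℕ := ⌈cN⌉₊ with hq
  have hc1 : (1 : ℝ) < cN := one_lt_cN' hlen
  have hcq : cN ≤ (q : ℝ) := Nat.le_ceil cN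
  constructor
  · intro f hf
    obtain ⟨k, hk, hkf⟩ := List.getElem_of_mem hf
    have hfk : fs.getD k [] = f := by rw [List.getD_eq_getElem _ _ hk]; exact hkf
    -- f is nonempty
    have hfne : f ≠ [] := by
      obtain ⟨hd, -⟩ := h.2 k hk
      rw [hfk] at hd
      rcases hd with ⟨c, hc⟩ | ⟨g, _, c, hc⟩ <;> simp [hc]
    -- length bound
    have hflen : (f.length : ℝ) ≤ cN := by
      have := lz_sum_bound' h hk
      rw [hfk] at this
      exact nat_le_cN' this
    have hfq : f.length ≤ q := by
      have : (f.length : ℝ) ≤ (q : ℝ) := le_trans hflen hcq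
      exact_mod_cast this
    -- f is an infix of the root
    have hinf : f <:+: P.val (P.n - 1) := by
      rw [← hS, h.1]
      exact List.infix_of_mem_flatten hf
    have hroot : cN ≤ ((P.val (P.n - 1)).length : ℝ) := by
      rw [← hS]
      exact le_trans (cN_le_N' hlen) (le_refl _)
    obtain ⟨j, hj, l, r, hrule, hcj, hfin⟩ :=
      descent' P cN q hcq hc1 (P.n - 1) f hfne hfq hinf hroot
    exact ⟨j, by omega, l, r, hrule, hcj, hfin⟩
  · have hterm : ∀ i, (P.tstr q i).length ≤ 2 * (q - 1) := by
      intro i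
      rcases hrule : P.rule i with a | ⟨l, r⟩
      · rw [SLP.tstr]; split <;> simp_all
      · rw [SLP.tstr_inr' hrule, List.length_append, List.length_drop, List.length_take]
        omega
    calc ∑ i ∈ (Finset.range P.n).filter (fun i => cN ≤ ((P.val i).length : ℝ)),
          (P.tstr q i).length
        ≤ ∑ i ∈ Finset.range P.n, (P.tstr q i).length :=
          Finset.sum_le_sum_of_subset (Finset.filter_subset _ _)
      _ ≤ ∑ _i ∈ Finset.range P.n, 2 * (q - 1) :=
          Finset.sum_le_sum fun i _ => hterm i
      _ = P.n * (2 * (q - 1)) := by simp [Finset.sum_const, Nat.mul_comm]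
      _ = 2 * P.n * (q - 1) := by ring
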